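/- Let n ≥ 1 and let (V,w) be the weighted graph on n vertices in which every unordered pair of distinct vertices has weight 1. Then every hierarchical clustering tree T on V satisfies cost(T) = (n³ − n)/3. -/

import Mathlib

open Finset

/-- A hierarchical clustering tree: a rooted binary tree with leaves labelled by vertices. -/
inductive HC (V : Type*) where
  | leaf : V → HC V
  | node : HC V → HC V → HC V

namespace HC

variable {V : Type*}

/-- The list of leaf labels of a tree, left to right. -/
def leafList : HC V → List V
  | .leaf v => [v]
  | .node l r => leafList l ++ leafList r

/-- The set of leaf labels of a tree. -/
def leaves [DecidableEq V] (t : HC V) : Finset V :=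
  t.leafList.toFinset

/-- `t.cluster i j` is the leaf set of the subtree of `t` rooted at the least common
ancestor of the leaves `i` and `j` (i.e. `leaves(T[i ∨ j])`). -/
def cluster [DecidableEq V] : HC V → V → V → Finset V
  | .leaf v, _, _ => {v}
  | .node l r, i, j =>
    if i ∈ l.leaves ∧ j ∈ l.leaves then l.cluster i j
    else if i ∈ r.leaves ∧ j ∈ r.leaves then r.cluster i j
    else (HC.node l r).leaves

/-- `t` is a hierarchical clustering tree on the whole vertex type `V`:
its leaves are in bijection with `V`. -/
def IsTreeOn [Fintype V] [DecidableEq V] (t : HC V) : Prop :=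
  t.leafList.Nodup ∧ t.leaves = Finset.univ

/-- Sum of `f A B` over all internal nodes of the tree, where `A`, `B` are the
leaf sets of the two children of the internal node. -/
def internalSum [DecidableEq V] (f : Finset V → Finset V → ℝ) : HC V → ℝ
  | .leaf _ => 0
  | .node l r => f l.leaves r.leaves + internalSum f l + internalSum f r

/-- The list of all subtrees of a tree. -/
def subtreesList : HC V → List (HC V)
  | .leaf v => [.leaf v]
  | .node l r => .node l r :: (subtreesList l ++ subtreesList r)

/-- Dasgupta's cost: sum over unordered pairs `{i,j}` of distinct vertices of
`w i j * |leaves(T[i ∨ j])|`. -/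
noncomputable def cost [Fintype V] [DecidableEq V] (w : V → V → ℝ) (t : HC V) : ℝ :=
  (1 / 2) * ∑ p ∈ Finset.univ.offDiag, w p.1 p.2 * ((t.cluster p.1 p.2).card : ℝ)

/-- Moseley–Wang revenue: sum over unordered pairs `{i,j}` of distinct vertices of
`w i j * |nonleaves(T[i ∨ j])|`. -/
noncomputable def rev [Fintype V] [DecidableEq V] (w : V → V → ℝ) (t : HC V) : ℝ :=
  (1 / 2) * ∑ p ∈ Finset.univ.offDiag,
    w p.1 p.2 * ((Finset.univ \ t.cluster p.1 p.2).card : ℝ)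

/-- Cohen-Addad et al.'s value: the same formula as cost, used for dissimilarity weights. -/
noncomputable def val [Fintype V] [DecidableEq V] (w : V → V → ℝ) (t : HC V) : ℝ :=
  cost w t

end HC

/-- The total weight `W`: the sum of `w i j` over unordered pairs of distinct vertices. -/
noncomputable def totalWeight {V : Type*} [Fintype V] [DecidableEq V] (w : V → V → ℝ) : ℝ :=
  (1 / 2) * ∑ p ∈ Finset.univ.offDiag, w p.1 p.2

/-- The merge cost of merging disjoint clusters `A` and `B`. -/
noncomputable def mergeCost {V : Type*} [Fintype V] [DecidableEq V] (w : V → V → ℝ) (A B : Finset V) : ℝ :=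
  (B.card : ℝ) * ∑ a ∈ A, ∑ c ∈ Finset.univ \ (A ∪ B), w a c
    + (A.card : ℝ) * ∑ b ∈ B, ∑ c ∈ Finset.univ \ (A ∪ B), w b c

/-- The merge revenue of merging disjoint clusters `A` and `B`. -/
noncomputable def mergeRev {V : Type*} [Fintype V] (w : V → V → ℝ) (A B : Finset V) : ℝ :=
  ((Fintype.card V : ℝ) - (A.card : ℝ) - (B.card : ℝ)) * ∑ a ∈ A, ∑ b ∈ B, w a b

/-- The average linkage between disjoint nonempty clusters `A` and `B`. -/
noncomputable def avgLinkage {V : Type*} (w : V → V → ℝ) (A B : Finset V) : ℝ :=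
  (1 / ((A.card : ℝ) * (B.card : ℝ))) * ∑ a ∈ A, ∑ b ∈ B, w a b

/-- A matching encoded as an involution `f : V → V`: the matched pairs are the pairs
`{v, f v}` with `f v ≠ v`; its weight is the sum of weights of matched pairs. -/
noncomputable def matchingWeight {V : Type*} [Fintype V] [DecidableEq V] (w : V → V → ℝ) (f : V → V) : ℝ :=
  (1 / 2) * ∑ v ∈ Finset.univ.filter (fun v => f v ≠ v), w v (f v)

/-- A perfect matching encoded as a fixed-point-free involution. -/
def IsPerfectMatching {V : Type*} (f : V → V) : Prop :=
  (∀ v, f (f v) = v) ∧ ∀ v, f v ≠ v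



namespace HC

lemma leaves_node' {V : Type*} [DecidableEq V] (l r : HC V) :
    (node l r).leaves = l.leaves ∪ r.leaves := by
  simp [leaves, leafList, List.toFinset_append]

lemma sum_cluster {V : Type*} [DecidableEq V] (t : HC V) (h : t.leafList.Nodup) :
    ∑ p ∈ t.leaves.offDiag, ((t.cluster p.1 p.2).card : ℝ)
      = 2 * (((t.leaves.card : ℝ)) ^ 3 - (t.leaves.card : ℝ)) / 3 := by
  induction t with
  | leaf v => simp [leaves, leafList]
  | node l r ihl ihr =>
    rw [leafList, List.nodup_append] at h
    obtain ⟨hl, hr, hdisj⟩ := h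
    have hD : Disjoint l.leaves r.leaves := by
      rw [Finset.disjoint_left]
      intro a ha hb
      simp only [leaves, List.mem_toFinset] at ha hb
      exact hdisj a ha a hb rfl
    have hcard : ((node l r).leaves.card : ℝ) = l.leaves.card + r.leaves.card := by
      rw [leaves_node', Finset.card_union_of_disjoint hD]; push_cast; ring
    have hsplit : (node l r).leaves.offDiag
        = (l.leaves.offDiag ∪ r.leaves.offDiag) ∪ (l.leaves ×ˢ r.leaves ∪ r.leaves ×ˢ l.leaves) := by
      rw [leaves_node', Finset.offDiag_union hD]
      ac_rfl
    have hclusL : ∀ p ∈ l.leaves.offDiag,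
        ((node l r).cluster p.1 p.2) = l.cluster p.1 p.2 := by
      intro p hp
      rw [Finset.mem_offDiag] at hp
      simp [cluster, hp.1, hp.2.1]
    have hclusR : ∀ p ∈ r.leaves.offDiag,
        ((node l r).cluster p.1 p.2) = r.cluster p.1 p.2 := by
      intro p hp
      rw [Finset.mem_offDiag] at hp
      have h1 : p.1 ∉ l.leaves := Finset.disjoint_right.1 hD hp.1
      have h2 : p.2 ∉ l.leaves := Finset.disjoint_right.1 hD hp.2.1
      simp [cluster, h1, h2, hp.1, hp.2.1]
    have hclusLR : ∀ p ∈ l.leaves ×ˢ r.leaves,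
        ((node l r).cluster p.1 p.2) = (node l r).leaves := by
      intro p hp
      rw [Finset.mem_product] at hp
      have h1 : p.1 ∉ r.leaves := Finset.disjoint_left.1 hD hp.1
      have h2 : p.2 ∉ l.leaves := Finset.disjoint_right.1 hD hp.2
      simp [cluster, h1, h2]
    have hclusRL : ∀ p ∈ r.leaves ×ˢ l.leaves,
        ((node l r).cluster p.1 p.2) = (node l r).leaves := by
      intro p hp
      rw [Finset.mem_product] at hp
      have h1 : p.1 ∉ l.leaves := Finset.disjoint_right.1 hD hp.1
      have h2 : p.2 ∉ r.leaves := Finset.disjoint_left.1 hD hp.2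
      simp [cluster, h1, h2]
    have d1 : Disjoint l.leaves.offDiag r.leaves.offDiag := by
      rw [Finset.disjoint_left]
      intro p hp hq
      rw [Finset.mem_offDiag] at hp hq
      exact Finset.disjoint_left.1 hD hp.1 hq.1
    have d2 : Disjoint (l.leaves ×ˢ r.leaves) (r.leaves ×ˢ l.leaves) := by
      rw [Finset.disjoint_left]
      intro p hp hq
      rw [Finset.mem_product] at hp hq
      exact Finset.disjoint_left.1 hD hp.1 hq.1
    have d3 : Disjoint (l.leaves.offDiag ∪ r.leaves.offDiag)
        (l.leaves ×ˢ r.leaves ∪ r.leaves ×ˢ l.leaves) := by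
      rw [Finset.disjoint_left]
      intro p hp hq
      simp only [Finset.mem_union] at hp hq
      rcases hp with hp | hp <;> rw [Finset.mem_offDiag] at hp <;>
        rcases hq with hq | hq <;> rw [Finset.mem_product] at hq
      · exact Finset.disjoint_left.1 hD hp.2.1 hq.2
      · exact Finset.disjoint_left.1 hD hp.1 hq.1
      · exact Finset.disjoint_left.1 hD hq.1 hp.1
      · exact Finset.disjoint_left.1 hD hq.2 hp.2.1
    have e1 : ∑ p ∈ l.leaves.offDiag, (((node l r).cluster p.1 p.2).card : ℝ)
        = 2 * (((l.leaves.card : ℝ)) ^ 3 - (l.leaves.card : ℝ)) / 3 := by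
      rw [Finset.sum_congr rfl (fun p hp => by rw [hclusL p hp]), ihl hl]
    have e2 : ∑ p ∈ r.leaves.offDiag, (((node l r).cluster p.1 p.2).card : ℝ)
        = 2 * (((r.leaves.card : ℝ)) ^ 3 - (r.leaves.card : ℝ)) / 3 := by
      rw [Finset.sum_congr rfl (fun p hp => by rw [hclusR p hp]), ihr hr]
    have e3 : ∑ p ∈ l.leaves ×ˢ r.leaves, (((node l r).cluster p.1 p.2).card : ℝ)
        = (l.leaves.card : ℝ) * r.leaves.card * ((l.leaves.card : ℝ) + r.leaves.card) := by
      rw [Finset.sum_congr rfl (fun p hp => by rw [hclusLR p hp]), Finset.sum_const,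
        Finset.card_product]
      push_cast [hcard]
      ring
    have e4 : ∑ p ∈ r.leaves ×ˢ l.leaves, (((node l r).cluster p.1 p.2).card : ℝ)
        = (l.leaves.card : ℝ) * r.leaves.card * ((l.leaves.card : ℝ) + r.leaves.card) := by
      rw [Finset.sum_congr rfl (fun p hp => by rw [hclusRL p hp]), Finset.sum_const,
        Finset.card_product]
      push_cast [hcard]
      simp only [nsmul_eq_mul, Nat.cast_mul]
      ring
    rw [hsplit, Finset.sum_union d3, Finset.sum_union d1, Finset.sum_union d2,
      e1, e2, e3, e4, hcard]
    ring

end HC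

/-- On the complete graph on `n ≥ 1` vertices in which every unordered pair of distinct
vertices has weight `1`, every hierarchical clustering tree has cost `(n³ − n)/3`. -/
theorem stmt11 (n : ℕ) (hn : 1 ≤ n)
    (t : HC (Fin n)) (ht : t.IsTreeOn) :
    HC.cost (fun i j => if i = j then 0 else 1) t = ((n : ℝ) ^ 3 - (n : ℝ)) / 3 := by
  have key := HC.sum_cluster t ht.1
  rw [ht.2] at key
  have hw : ∀ p ∈ (Finset.univ : Finset (Fin n)).offDiag,
      (if p.1 = p.2 then (0:ℝ) else 1) * ((t.cluster p.1 p.2).card : ℝ)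
        = ((t.cluster p.1 p.2).card : ℝ) := by
    intro p hp
    rw [Finset.mem_offDiag] at hp
    simp [hp.2.2]
  rw [HC.cost, Finset.sum_congr rfl hw, key]
  have hc : ((Finset.univ : Finset (Fin n)).card : ℝ) = n := by simp
  rw [hc]
  ring
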